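/- Let (V,g) be a pseudo-Euclidean space, let L be a g-skew-adjoint endomorphism of V, and let p ∈ V with p ∉ L(V). Set H = ker L ∩ {x ∈ V : g(p,x) = 0}. Then H^⊥ = L(V) ⊕ ℝ·p; that is, H^⊥ = L(V) + span{p} and L(V) ∩ span{p} = {0}. -/

import Mathlib

/-- For a `g`-skew-adjoint endomorphism `L` of a pseudo-Euclidean
space `(V,g)` and `p ∉ L(V)`, setting `H = ker L ∩ ker g(p,·)`, one has
`H^⊥ = L(V) ⊕ ℝ·p`: the orthogonal complement of `H` is `L(V) + span{p}`,
and `L(V) ∩ span{p} = {0}`. -/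
theorem stmt6
    {V : Type*} [AddCommGroup V] [Module ℝ V] [FiniteDimensional ℝ V]
    (g : V →ₗ[ℝ] V →ₗ[ℝ] ℝ)
    (hg_symm : ∀ x y : V, g x y = g y x)
    (hg_nondeg : ∀ x : V, (∀ y : V, g x y = 0) → x = 0)
    (L : V →ₗ[ℝ] V)
    (hL_skew : ∀ x y : V, g (L x) y = - g x (L y))
    (p : V) (hp : p ∉ LinearMap.range L) :
    {x : V | ∀ w : V, L w = 0 → g p w = 0 → g w x = 0} =
      ((LinearMap.range L ⊔ Submodule.span ℝ {p} : Submodule ℝ V) : Set V) ∧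
    LinearMap.range L ⊓ Submodule.span ℝ {p} = ⊥ := by
  have hnd : LinearMap.BilinForm.Nondegenerate g :=
    ⟨hg_nondeg, fun y hy => hg_nondeg y (fun x => by rw [hg_symm]; exact hy x)⟩
  have hrefl : LinearMap.BilinForm.IsRefl g := fun x y h => by rw [hg_symm]; exact h
  set W : Submodule ℝ V := LinearMap.range L ⊔ Submodule.span ℝ {p} with hW
  have horth : LinearMap.BilinForm.orthogonal g W = LinearMap.ker L ⊓ LinearMap.ker (g p) := by
    ext m
    simp only [LinearMap.BilinForm.mem_orthogonal_iff, Submodule.mem_inf,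
      LinearMap.mem_ker]
    constructor
    · intro h
      constructor
      · apply hg_nondeg
        intro y
        have := h (L y) (le_sup_left (a := LinearMap.range L) ⟨y, rfl⟩)
        rw [hL_skew] at this
        rw [hg_symm]
        linarith
      · exact h p (le_sup_right (b := Submodule.span ℝ {p})
          (Submodule.mem_span_singleton_self p))
    · rintro ⟨h1, h2⟩ n hn
      rw [hW, Submodule.mem_sup] at hn
      obtain ⟨a, ⟨x, rfl⟩, b, hb, rfl⟩ := hn
      obtain ⟨c, rfl⟩ := Submodule.mem_span_singleton.1 hb
      have : g (L x) m = 0 := by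
        rw [hL_skew, hg_symm, h1]
        simp
      simp [LinearMap.BilinForm.IsOrtho, this, h2]
  constructor
  · have key : LinearMap.BilinForm.orthogonal g (LinearMap.BilinForm.orthogonal g W) = W :=
      LinearMap.BilinForm.orthogonal_orthogonal hnd hrefl W
    rw [← key, horth]
    ext x
    simp only [Set.mem_setOf_eq, SetLike.mem_coe,
      LinearMap.BilinForm.mem_orthogonal_iff, Submodule.mem_inf, LinearMap.mem_ker]
    constructor
    · rintro h n ⟨h1, h2⟩
      exact h n h1 h2
    · intro h w h1 h2
      exact h w ⟨h1, h2⟩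
  · rw [eq_bot_iff]
    rintro x ⟨hx1, hx2⟩
    obtain ⟨c, rfl⟩ := Submodule.mem_span_singleton.1 hx2
    rcases eq_or_ne c 0 with rfl | hc
    · simp
    · exact (hp ((Submodule.smul_mem_iff _ hc).1 hx1)).elim
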